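/- For d ≥ 1, β > d/2 and c > 0, the Matérn kernel admits the Schönberg/Gaussian-mixture representation: A · (‖x−y‖₂^{β−d/2} / c^{d/2−β}) · K_{d/2−β}(c‖x−y‖₂) = (c^{2β−d}/Γ(β−d/2)) ∫₀^∞ e^{−‖x−y‖₂²/(4t)} t^{β−1−d/2} e^{−c²t} dt for all x ≠ y in ℝ^d, where A = 2^{d/2+1−β}/Γ(β−d/2) and K_ν is the modified Bessel function of the third kind. Consequently sup_{x,y} k(x,y) = 1 (value at x = y). -/

import Mathlib

open MeasureTheory

/-- The modified Bessel function of the third (second) kind `K_ν(z)`, via its standard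
integral representation `K_ν(z) = (1/2) (z/2)^ν ∫₀^∞ e^{−t − z²/(4t)} t^{−ν−1} dt`
(valid for `z > 0`). -/
noncomputable def besselK (ν z : ℝ) : ℝ :=
  (1 / 2) * (z / 2) ^ ν *
    ∫ t in Set.Ioi (0 : ℝ), Real.exp (-t - z ^ 2 / (4 * t)) * t ^ (-ν - 1)

open Set in
/-- Change of variables `u = c² t` in the Bessel-type integral. -/
private lemma besselK_subst (s c r : ℝ) (hc : 0 < c) :
    (∫ u in Ioi (0:ℝ), Real.exp (-u - (c * r) ^ 2 / (4 * u)) * u ^ (s - 1))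
      = (c ^ 2) ^ s * ∫ t in Ioi (0:ℝ),
          Real.exp (-r ^ 2 / (4 * t)) * t ^ (s - 1) * Real.exp (-c ^ 2 * t) := by
  have hc2 : (0:ℝ) < c ^ 2 := by positivity
  have h := MeasureTheory.integral_comp_mul_left_Ioi
      (fun u => Real.exp (-u - (c * r) ^ 2 / (4 * u)) * u ^ (s - 1)) 0 hc2
  simp only [mul_zero, smul_eq_mul] at h
  have key : ∀ x ∈ Ioi (0:ℝ),
      Real.exp (-(c ^ 2 * x) - (c * r) ^ 2 / (4 * (c ^ 2 * x))) * (c ^ 2 * x) ^ (s - 1)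
      = (c ^ 2) ^ (s - 1)
          * (Real.exp (-r ^ 2 / (4 * x)) * x ^ (s - 1) * Real.exp (-c ^ 2 * x)) := by
    intro x hx
    rw [Real.mul_rpow hc2.le (le_of_lt hx),
      show -(c ^ 2 * x) - (c * r) ^ 2 / (4 * (c ^ 2 * x))
          = -r ^ 2 / (4 * x) + -c ^ 2 * x by
        have hx0 : x ≠ 0 := ne_of_gt hx
        field_simp
        ring,
      Real.exp_add]
    ring
  have h2 : (∫ x in Ioi (0:ℝ),
        Real.exp (-(c ^ 2 * x) - (c * r) ^ 2 / (4 * (c ^ 2 * x))) * (c ^ 2 * x) ^ (s - 1))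
      = (c ^ 2) ^ (s - 1) * ∫ t in Ioi (0:ℝ),
          Real.exp (-r ^ 2 / (4 * t)) * t ^ (s - 1) * Real.exp (-c ^ 2 * t) := by
    rw [MeasureTheory.setIntegral_congr_fun measurableSet_Ioi key]
    exact MeasureTheory.integral_const_mul _ _
  have h3 : (∫ u in Ioi (0:ℝ), Real.exp (-u - (c * r) ^ 2 / (4 * u)) * u ^ (s - 1))
      = c ^ 2 * ∫ x in Ioi (0:ℝ),
          Real.exp (-(c ^ 2 * x) - (c * r) ^ 2 / (4 * (c ^ 2 * x))) * (c ^ 2 * x) ^ (s - 1) := by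
    rw [h, ← mul_assoc, mul_inv_cancel₀ hc2.ne', one_mul]
  rw [h3, h2, ← mul_assoc, show s = 1 + (s - 1) by ring, Real.rpow_add hc2, Real.rpow_one]
  ring_nf

/-- For `d ≥ 1`, `β > d/2`, `c > 0`, the Matérn kernel admits the
Schönberg/Gaussian-mixture representation
`A ‖x−y‖^{β−d/2} c^{β−d/2} K_{d/2−β}(c‖x−y‖) = (c^{2β−d}/Γ(β−d/2)) ∫₀^∞ e^{−‖x−y‖²/(4t)}
t^{β−1−d/2} e^{−c²t} dt` for all `x ≠ y`, where `A = 2^{d/2+1−β}/Γ(β−d/2)`. Consequently the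
supremum of the kernel (given by the mixture form, which extends to `x = y`) equals `1`. -/
theorem stmt_18 (d : ℕ) (β c : ℝ) (hd : 1 ≤ d) (hβ : (d : ℝ) / 2 < β) (hc : 0 < c) :
    (∀ x y : EuclideanSpace ℝ (Fin d), x ≠ y →
      ((2 : ℝ) ^ ((d : ℝ) / 2 + 1 - β) / Real.Gamma (β - (d : ℝ) / 2))
          * (‖x - y‖ ^ (β - (d : ℝ) / 2) / c ^ ((d : ℝ) / 2 - β))
          * besselK ((d : ℝ) / 2 - β) (c * ‖x - y‖)
        = (c ^ (2 * β - (d : ℝ)) / Real.Gamma (β - (d : ℝ) / 2))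
          * ∫ t in Set.Ioi (0 : ℝ),
              Real.exp (-‖x - y‖ ^ 2 / (4 * t)) * t ^ (β - 1 - (d : ℝ) / 2)
                * Real.exp (-c ^ 2 * t)) ∧
    (⨆ x : EuclideanSpace ℝ (Fin d), ⨆ y : EuclideanSpace ℝ (Fin d),
      (c ^ (2 * β - (d : ℝ)) / Real.Gamma (β - (d : ℝ) / 2))
        * ∫ t in Set.Ioi (0 : ℝ),
            Real.exp (-‖x - y‖ ^ 2 / (4 * t)) * t ^ (β - 1 - (d : ℝ) / 2)
              * Real.exp (-c ^ 2 * t)) = 1 := by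
  set s : ℝ := β - (d : ℝ) / 2 with hs_def
  have hs : 0 < s := by simp only [hs_def]; linarith
  have hΓ : 0 < Real.Gamma s := Real.Gamma_pos_of_pos hs
  have hc2 : (0:ℝ) < c ^ 2 := by positivity
  have hcs : (0:ℝ) < c ^ s := Real.rpow_pos_of_pos hc s
  -- `c ^ (2β − d) = (c²)^s`
  have hpow : c ^ (2 * β - (d:ℝ)) = (c ^ 2) ^ s := by
    have h1 : (2 * β - (d:ℝ)) = s + s := by simp only [hs_def]; ring
    have h2 : (c ^ 2 : ℝ) = c * c := sq c
    rw [h1, Real.rpow_add hc, h2, Real.mul_rpow hc.le hc.le]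
  -- the Gamma integral
  have hgamma : (∫ t in Set.Ioi (0:ℝ), t ^ (s - 1) * Real.exp (-(c ^ 2 * t)))
      = (1 / c ^ 2) ^ s * Real.Gamma s := Real.integral_rpow_mul_exp_neg_mul_Ioi hs hc2
  have hexp : β - 1 - (d:ℝ)/2 = s - 1 := by simp only [hs_def]; ring
  constructor
  · -- Part 1
    intro x y hxy
    have hr : 0 < ‖x - y‖ := by
      rw [norm_sub_pos_iff]; exact hxy
    set r : ℝ := ‖x - y‖ with hr_def
    have hrs : (0:ℝ) < r ^ s := Real.rpow_pos_of_pos hr s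
    have h2s : (0:ℝ) < (2:ℝ) ^ s := Real.rpow_pos_of_pos two_pos s
    rw [hexp, besselK, show -((d:ℝ)/2 - β) - 1 = s - 1 by ring, besselK_subst s c r hc]
    have hνs : (d:ℝ)/2 - β = -s := by simp only [hs_def]; ring
    have hA : (d:ℝ)/2 + 1 - β = 1 - s := by simp only [hs_def]; ring
    rw [hνs, hA, hpow]
    have e1 : (2:ℝ) ^ (1 - s) = 2 / 2 ^ s := by
      rw [Real.rpow_sub two_pos, Real.rpow_one]
    have e2 : c ^ (-s : ℝ) = (c ^ s)⁻¹ := Real.rpow_neg hc.le s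
    have e3 : (c * r / 2) ^ (-s : ℝ) = (c ^ s * r ^ s / 2 ^ s)⁻¹ := by
      rw [Real.rpow_neg (by positivity),
        Real.div_rpow (by positivity) (by norm_num),
        Real.mul_rpow hc.le hr.le]
    rw [e1, e2, e3]
    have hcsrs : c ^ s * r ^ s / (2:ℝ) ^ s ≠ 0 := by positivity
    field_simp
  · -- Part 2
    -- the kernel function
    set g : EuclideanSpace ℝ (Fin d) → EuclideanSpace ℝ (Fin d) → ℝ := fun x y =>
      (c ^ (2 * β - (d : ℝ)) / Real.Gamma (β - (d : ℝ) / 2))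
        * ∫ t in Set.Ioi (0 : ℝ),
            Real.exp (-‖x - y‖ ^ 2 / (4 * t)) * t ^ (β - 1 - (d : ℝ) / 2)
              * Real.exp (-c ^ 2 * t) with hg_def
    have hInt : IntegrableOn (fun t : ℝ => t ^ (s - 1) * Real.exp (-(c ^ 2 * t)))
        (Set.Ioi 0) := by
      have := integrableOn_rpow_mul_exp_neg_mul_rpow (p := 1) (s := s - 1) (b := c ^ 2)
        (by linarith) one_pos hc2
      simpa [Real.rpow_one, neg_mul] using this
    have hCpos : 0 < c ^ (2 * β - (d:ℝ)) / Real.Gamma s := by positivity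
    have hle : ∀ x y : EuclideanSpace ℝ (Fin d), g x y ≤ 1 := by
      intro x y
      have hIle : (∫ t in Set.Ioi (0:ℝ),
            Real.exp (-‖x - y‖ ^ 2 / (4 * t)) * t ^ (β - 1 - (d : ℝ) / 2)
              * Real.exp (-c ^ 2 * t))
          ≤ ∫ t in Set.Ioi (0:ℝ), t ^ (s - 1) * Real.exp (-(c ^ 2 * t)) := by
        rw [hexp]
        apply MeasureTheory.integral_mono_of_nonneg
        · filter_upwards [MeasureTheory.ae_restrict_mem measurableSet_Ioi] with t ht
          have h1 := Real.rpow_pos_of_pos (Set.mem_Ioi.mp ht) (s - 1)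
          positivity
        · exact hInt
        · filter_upwards [MeasureTheory.ae_restrict_mem measurableSet_Ioi] with t ht
          have ht0 : (0:ℝ) < t := Set.mem_Ioi.mp ht
          have h1 : Real.exp (-‖x - y‖ ^ 2 / (4 * t)) ≤ 1 := by
            apply Real.exp_le_one_iff.mpr
            apply div_nonpos_of_nonpos_of_nonneg
            · simp only [neg_nonpos]
              positivity
            · positivity
          have h2 := Real.rpow_pos_of_pos ht0 (s - 1)
          have h3 := Real.exp_pos (-c ^ 2 * t)
          calc Real.exp (-‖x - y‖ ^ 2 / (4 * t)) * t ^ (s - 1) * Real.exp (-c ^ 2 * t)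
              ≤ 1 * t ^ (s - 1) * Real.exp (-c ^ 2 * t) := by
                apply mul_le_mul_of_nonneg_right _ h3.le
                exact mul_le_mul_of_nonneg_right h1 h2.le
            _ = t ^ (s - 1) * Real.exp (-(c ^ 2 * t)) := by rw [one_mul, neg_mul]
      calc g x y ≤ (c ^ (2 * β - (d:ℝ)) / Real.Gamma s)
            * ((1 / c ^ 2) ^ s * Real.Gamma s) := by
            rw [hg_def]
            simp only [← hs_def, ← hgamma]
            exact mul_le_mul_of_nonneg_left hIle hCpos.le
        _ = 1 := by
            have hne := (Real.rpow_pos_of_pos hc2 s).ne'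
            rw [hpow, one_div, Real.inv_rpow hc2.le]
            field_simp
    have hdiag : ∀ x : EuclideanSpace ℝ (Fin d), g x x = 1 := by
      intro x
      rw [hg_def]
      simp only [sub_self, norm_zero]
      have : (∫ t in Set.Ioi (0:ℝ),
          Real.exp (-(0:ℝ) ^ 2 / (4 * t)) * t ^ (β - 1 - (d : ℝ) / 2)
            * Real.exp (-c ^ 2 * t))
          = ∫ t in Set.Ioi (0:ℝ), t ^ (s - 1) * Real.exp (-(c ^ 2 * t)) := by
        rw [hexp]
        apply MeasureTheory.setIntegral_congr_fun measurableSet_Ioi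
        intro t ht
        simp [neg_mul]
      rw [this, hgamma, hpow, ← hs_def]
      rw [Real.div_rpow (by norm_num) hc2.le, Real.one_rpow]
      field_simp
    have hbdd : ∀ x : EuclideanSpace ℝ (Fin d), BddAbove (Set.range fun y => g x y) := by
      intro x
      exact ⟨1, by rintro v ⟨y, rfl⟩; exact hle x y⟩
    have hinner : ∀ x : EuclideanSpace ℝ (Fin d), (⨆ y, g x y) = 1 := by
      intro x
      apply le_antisymm
      · exact ciSup_le fun y => hle x y
      · calc (1:ℝ) = g x x := (hdiag x).symm
          _ ≤ ⨆ y, g x y := le_ciSup (hbdd x) x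
    calc (⨆ x, ⨆ y, g x y) = ⨆ _ : EuclideanSpace ℝ (Fin d), (1:ℝ) := by
          congr 1; ext x; exact hinner x
      _ = 1 := ciSup_const
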